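/- If there exists a non-sofic group, then there exists a countable non-sofic group G together with a strictly monotone (order-embedding) map q ↦ C_q from the rationals ℚ (with its usual order) to the subgroups of G ordered by inclusion, such that each subgroup C_q is non-sofic and is isomorphic to G as a group. -/

import Mathlib

/-- The normalized Hamming distance between two permutations of `Fin n`:
the number of points where they differ, divided by `n`. -/
noncomputable def permHammingDist {n : ℕ} (σ τ : Equiv.Perm (Fin n)) : ℝ :=
  ((Finset.univ.filter fun i => σ i ≠ τ i).card : ℝ) / n

/-- A group `G` is sofic if for every finite subset `F ⊆ G` and every `ε > 0` there exist
`n ≥ 1` and a map `θ` from `F` to `Sym(Fin n)` (extended to all of `G`) such that: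
(i) `θ` is an `ε`-approximate homomorphism on `F`;
(ii) `θ` almost sends the identity to the identity;
(iii) distinct elements of `F` are sent to permutations at Hamming distance at least `1/4`. -/
def IsSofic (G : Type*) [Group G] : Prop :=
  ∀ (F : Finset G) (ε : ℝ), 0 < ε →
    ∃ n : ℕ, 1 ≤ n ∧ ∃ θ : G → Equiv.Perm (Fin n),
      (∀ g h : G, g ∈ F → h ∈ F → g * h ∈ F →
        permHammingDist (θ g * θ h) (θ (g * h)) < ε) ∧
      ((1 : G) ∈ F → permHammingDist (θ 1) 1 < ε) ∧
      (∀ x y : G, x ∈ F → y ∈ F → x ≠ y → 1 / 4 ≤ permHammingDist (θ x) (θ y))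

/-- A group is minimal non-sofic if it is not sofic but every proper subgroup is sofic. -/
def IsMinimalNonSofic (G : Type*) [Group G] : Prop :=
  ¬ IsSofic G ∧ ∀ H : Subgroup G, H ≠ ⊤ → IsSofic H

/-- Soficity pulls back along injective homomorphisms. -/
theorem isSofic_of_injective {H G : Type*} [Group H] [Group G] (f : H →* G)
    (hf : Function.Injective f) (hG : IsSofic G) : IsSofic H := by
  classical
  intro F ε hε
  obtain ⟨n, hn, θ, h1, h2, h3⟩ := hG (F.image f) ε hε
  refine ⟨n, hn, fun g => θ (f g), ?_, ?_, ?_⟩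
  · intro g h' hg hh hgh
    have hmul : f g * f h' = f (g * h') := (map_mul f g h').symm
    have := h1 (f g) (f h') (Finset.mem_image_of_mem f hg) (Finset.mem_image_of_mem f hh)
      (by rw [hmul]; exact Finset.mem_image_of_mem f hgh)
    rwa [hmul] at this
  · intro h1'
    have h1G : (1 : G) ∈ F.image f := by
      simpa [map_one] using Finset.mem_image_of_mem f h1'
    have := h2 h1G
    simpa using this
  · intro x y hx hy hxy
    exact h3 (f x) (f y) (Finset.mem_image_of_mem f hx) (Finset.mem_image_of_mem f hy)
      fun e => hxy (hf e)

/-- Groups all of whose elements are trivial are sofic. -/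
theorem isSofic_of_subsingleton {G : Type*} [Group G] (hs : ∀ g : G, g = 1) : IsSofic G := by
  intro F ε hε
  refine ⟨1, le_refl 1, fun _ => 1, ?_, ?_, ?_⟩
  · intro g h _ _ _
    simpa [permHammingDist] using hε
  · intro _
    simpa [permHammingDist] using hε
  · intro x y _ _ hxy
    exact absurd ((hs x).trans (hs y).symm) hxy

theorem isSofic_aux {G : Type*} [Group G] (K : Subgroup G) (hK : IsSofic K)
    (F : Finset G) (hFK : ∀ g ∈ F, g ∈ K) (ε : ℝ) (hε : 0 < ε) :
    ∃ n : ℕ, 1 ≤ n ∧ ∃ θ : G → Equiv.Perm (Fin n),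
      (∀ g h : G, g ∈ F → h ∈ F → g * h ∈ F →
        permHammingDist (θ g * θ h) (θ (g * h)) < ε) ∧
      ((1 : G) ∈ F → permHammingDist (θ 1) 1 < ε) ∧
      (∀ x y : G, x ∈ F → y ∈ F → x ≠ y → 1 / 4 ≤ permHammingDist (θ x) (θ y)) := by
  classical
  have key := hK (F.attach.image fun x => (⟨x.1, hFK x.1 x.2⟩ : K)) ε hε
  obtain ⟨n, hn, θK, h1, h2, h3⟩ := key
  have hF' : ∀ (g : G) (hg : g ∈ K),
      ((⟨g, hg⟩ : K) ∈ F.attach.image fun x => (⟨x.1, hFK x.1 x.2⟩ : K))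
      ↔ g ∈ F := by
    intro g hg
    simp [Finset.mem_image, Subtype.ext_iff]
  refine ⟨n, hn, fun g => if hg : g ∈ K then θK ⟨g, hg⟩ else 1, ?_, ?_, ?_⟩
  · intro g h' hg hh hgh
    have hgK : g ∈ K := hFK _ hg
    have hhK : h' ∈ K := hFK _ hh
    have hghK : g * h' ∈ K := hFK _ hgh
    simp only [dif_pos hgK, dif_pos hhK, dif_pos hghK]
    have hmul : ((⟨g, hgK⟩ : K) * ⟨h', hhK⟩) = ⟨g * h', hghK⟩ := rfl
    have := h1 ⟨g, hgK⟩ ⟨h', hhK⟩ ((hF' _ _).2 hg) ((hF' _ _).2 hh)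
      (by rw [hmul]; exact (hF' _ _).2 hgh)
    rwa [hmul] at this
  · intro h1F
    have h1K : (1 : G) ∈ K := one_mem K
    simp only [dif_pos h1K]
    exact h2 ((hF' 1 h1K).2 h1F)
  · intro x y hx hy hxy
    have hxK : x ∈ K := hFK _ hx
    have hyK : y ∈ K := hFK _ hy
    simp only [dif_pos hxK, dif_pos hyK]
    exact h3 _ _ ((hF' _ _).2 hx) ((hF' _ _).2 hy)
      fun e => hxy (congrArg Subtype.val e)

/-- Soficity is a local property: if the closure of every finite subset is sofic,
then the group is sofic. -/
theorem isSofic_of_forall_closure {G : Type*} [Group G]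
    (h : ∀ F : Finset G, IsSofic (Subgroup.closure (F : Set G))) : IsSofic G := by
  intro F ε hε
  exact isSofic_aux _ (h F) F (fun g hg => Subgroup.subset_closure hg) ε hε

/-- If a non-sofic group exists, then there is a countable non-sofic group `G`
with a strictly monotone map `q ↦ C q` from `ℚ` to the subgroups of `G` (ordered by
inclusion) such that each `C q` is non-sofic and isomorphic to `G`. -/
theorem exists_countable_nonSofic_with_rational_chain
    (h : ∃ (G : Type) (_ : Group G), ¬ IsSofic G) :
    ∃ (G : Type) (_ : Group G), Countable G ∧ ¬ IsSofic G ∧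
      ∃ C : ℚ → Subgroup G, StrictMono C ∧
        ∀ q : ℚ, ¬ IsSofic (C q) ∧ Nonempty ((C q) ≃* G) := by
  classical
  obtain ⟨G0, _, hG0⟩ := h
  -- a countable (finitely generated) non-sofic subgroup
  have hexF : ∃ F : Finset G0, ¬ IsSofic (Subgroup.closure (F : Set G0)) := by
    by_contra hc
    push_neg at hc
    exact hG0 (isSofic_of_forall_closure hc)
  obtain ⟨F, hFns⟩ := hexF
  haveI hKc : Countable (Subgroup.closure (F : Set G0)) := by
    haveI hcnt : Countable (FreeGroup ↥(F : Set G0)) := by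
      have hsurj : Function.Surjective
          (FreeGroup.mk : List (↥(F : Set G0) × Bool) → FreeGroup ↥(F : Set G0)) := by
        intro x
        exact Quot.inductionOn x fun L => ⟨L, rfl⟩
      exact hsurj.countable
    have hsur := MonoidHom.rangeRestrict_surjective
      (FreeGroup.lift (fun x : ↥(F : Set G0) => (x : G0)))
    have hc2 : Countable ((FreeGroup.lift (fun x : ↥(F : Set G0) => (x : G0))).range) :=
      hsur.countable
    rwa [FreeGroup.range_lift_eq_closure, Subtype.range_coe] at hc2
  set H := ↥(Subgroup.closure (F : Set G0)) with hHdef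
  -- a nontrivial element
  obtain ⟨a, ha⟩ : ∃ a : H, a ≠ 1 := by
    by_contra hc
    push_neg at hc
    exact hFns (isSofic_of_subsingleton hc)
  haveI : Countable (Additive H) := Countable.of_equiv _ Additive.ofMul
  set G : Type := Multiplicative (ℚ →₀ Additive H) with hGdef
  haveI : Countable G := Countable.of_equiv _ Multiplicative.ofAdd
  -- the embedding of H into G at coordinate 0
  let ι : H →* G :=
    { toFun := fun x => Multiplicative.ofAdd (Finsupp.single 0 (Additive.ofMul x))
      map_one' := by simp
      map_mul' := by intro x y; simp [Finsupp.single_add] }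
  have hι : Function.Injective ι := by
    intro x y hxy
    have h1 : Finsupp.single (0 : ℚ) (Additive.ofMul x) = Finsupp.single 0 (Additive.ofMul y) :=
      Multiplicative.ofAdd.injective hxy
    exact Additive.ofMul.injective (Finsupp.single_injective 0 h1)
  have hGns : ¬ IsSofic G := fun hs => hFns (isSofic_of_injective ι hι hs)
  -- the chain of subgroups
  let C : ℚ → Subgroup G := fun q =>
    { carrier := {x | ∀ p : ℚ, q ≤ p → Multiplicative.toAdd x p = 0}
      one_mem' := fun p _ => by simp
      mul_mem' := by
        intro x y hx hy p hp
        rw [toAdd_mul, Finsupp.add_apply, hx p hp, hy p hp, add_zero]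
      inv_mem' := by
        intro x hx p hp
        rw [toAdd_inv, Finsupp.neg_apply, hx p hp, neg_zero] }
  have hmemC : ∀ (q : ℚ) (x : G), x ∈ C q ↔ ∀ p : ℚ, q ≤ p → Multiplicative.toAdd x p = 0 :=
    fun _ _ => Iff.rfl
  refine ⟨G, inferInstance, inferInstance, hGns, C, ?_, ?_⟩
  · -- strict monotonicity
    intro q q' hqq'
    rw [SetLike.lt_iff_le_and_exists]
    constructor
    · intro x hx p hp
      exact hx p (le_trans hqq'.le hp)
    · refine ⟨Multiplicative.ofAdd (Finsupp.single q (Additive.ofMul a)), ?_, ?_⟩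
      · intro p hp
        have hne : q ≠ p := ne_of_lt (lt_of_lt_of_le hqq' hp)
        simpa using Finsupp.single_eq_of_ne' hne
      · intro hc
        have := hc q le_rfl
        simp only [toAdd_ofAdd, Finsupp.single_eq_same] at this
        exact ha (ofMul_eq_zero.mp this)
  · intro q
    -- an equivalence ℚ ≃ {p // p < q}
    haveI : Infinite {p : ℚ // p < q} := by
      apply Infinite.of_injective (fun n : ℕ =>
        (⟨q - 1 - n, by have h0 : (0 : ℚ) ≤ n := Nat.cast_nonneg n; linarith⟩ : {p : ℚ // p < q}))
      intro m n hmn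
      have h1 : q - 1 - (m : ℚ) = q - 1 - (n : ℚ) := congrArg Subtype.val hmn
      have h2 : (m : ℚ) = n := by linarith
      exact_mod_cast h2
    obtain ⟨d⟩ : Nonempty (Denumerable {p : ℚ // p < q}) :=
      nonempty_denumerable_iff.mpr ⟨inferInstance, inferInstance⟩
    let e : ℚ ≃ {p : ℚ // p < q} := (Denumerable.eqv ℚ).trans (@Denumerable.eqv _ d).symm
    let j : ℚ ↪ ℚ := ⟨fun r => (e r).1, fun r s hrs => e.injective (Subtype.ext hrs)⟩
    have hjr : ∀ p : ℚ, p ∈ Set.range j ↔ p < q := by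
      intro p
      constructor
      · rintro ⟨r, rfl⟩
        exact (e r).2
      · intro hp
        exact ⟨e.symm ⟨p, hp⟩, by show (e (e.symm ⟨p, hp⟩)).1 = p; simp⟩
    let Φ : (ℚ →₀ Additive H) →+ (ℚ →₀ Additive H) :=
      { toFun := Finsupp.embDomain j
        map_zero' := Finsupp.embDomain_zero j
        map_add' := Finsupp.embDomain_add j }
    let Φ' : G →* G := AddMonoidHom.toMultiplicative Φ
    have hΦinj : Function.Injective Φ' := by
      intro x y hxy
      exact Finsupp.embDomain_injective j hxy
    have hrange : Φ'.range = C q := by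
      ext x
      rw [hmemC]
      constructor
      · rintro ⟨y, rfl⟩ p hp
        exact Finsupp.embDomain_notin_range j (Multiplicative.toAdd y) p
          (by rw [hjr]; exact not_lt.mpr hp)
      · intro hx
        have hΦ'app : ∀ y : ℚ →₀ Additive H,
            Multiplicative.toAdd (Φ' (Multiplicative.ofAdd y)) = Finsupp.embDomain j y :=
          fun _ => rfl
        refine ⟨Multiplicative.ofAdd
          (Finsupp.comapDomain j (Multiplicative.toAdd x) (j.injective.injOn)), ?_⟩
        apply Multiplicative.toAdd.injective
        rw [hΦ'app]
        refine Finsupp.ext fun p => ?_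
        by_cases hpq : p < q
        · obtain ⟨r, rfl⟩ := (hjr p).mpr hpq
          rw [Finsupp.embDomain_apply_self, Finsupp.comapDomain_apply]
        · rw [Finsupp.embDomain_notin_range j _ p (by rw [hjr]; exact hpq)]
          exact (hx p (not_lt.mp hpq)).symm
    let iso : (C q) ≃* G :=
      (MulEquiv.subgroupCongr hrange.symm).trans (MonoidHom.ofInjective hΦinj).symm
    exact ⟨fun hs => hGns (isSofic_of_injective iso.symm.toMonoidHom iso.symm.injective hs), ⟨iso⟩⟩
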